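/- Let n ≥ 1 and let π : ℝ^n → ℝ be concave, monotone and translation-invariant with π(0) = 0. Then the infimum over all λ ∈ ℝ^n of the concave dual π̃(λ) = sup_{K ∈ ℝ^n} (π(K) − λ·K) equals 0. -/

import Mathlib

open scoped BigOperators

section Aux

variable {E : Type*} [AddCommGroup E] [Module ℝ E]

variable (f : E → ℝ)

/-- slope monotonicity for a convex function vanishing at 0 -/
theorem slope_mono_aux (hf : ConvexOn ℝ Set.univ f) (hf0 : f 0 = 0)
    {t s : ℝ} (ht : 0 < t) (hts : t ≤ s) (K : E) :
    f (t • K) / t ≤ f (s • K) / s := by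
  have hs : 0 < s := ht.trans_le hts
  have ha : (0:ℝ) ≤ t / s := by positivity
  have hb : (0:ℝ) ≤ 1 - t / s := by
    have : t / s ≤ 1 := (div_le_one hs).2 hts
    linarith
  have hab : t / s + (1 - t / s) = 1 := by ring
  have key := hf.2 (Set.mem_univ (s • K)) (Set.mem_univ (0:E)) ha hb hab
  rw [smul_zero, add_zero, smul_smul, div_mul_cancel₀ _ hs.ne', smul_eq_mul, smul_eq_mul,
    hf0, mul_zero, add_zero] at key
  rw [div_le_div_iff₀ ht hs]
  calc f (t • K) * s ≤ t / s * f (s • K) * s := by nlinarith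
    _ = f (s • K) * t := by field_simp

theorem nonneg_add_aux (hf : ConvexOn ℝ Set.univ f) (hf0 : f 0 = 0) (x : E) :
    0 ≤ f x + f (-x) := by
  have key := hf.2 (Set.mem_univ x) (Set.mem_univ (-x)) (by norm_num : (0:ℝ) ≤ 1/2)
    (by norm_num : (0:ℝ) ≤ 1/2) (by norm_num)
  rw [smul_eq_mul, smul_eq_mul] at key
  have hx : (1/2 : ℝ) • x + (1/2 : ℝ) • (-x) = 0 := by
    rw [smul_neg, add_neg_cancel]
  rw [hx, hf0] at key
  linarith

end Aux

section N

variable {E : Type*} [AddCommGroup E] [Module ℝ E]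
variable (f : E → ℝ) (hf : ConvexOn ℝ Set.univ f) (hf0 : f 0 = 0)

/-- directional derivative at 0 -/
noncomputable def Nfun (K : E) : ℝ := sInf ((fun t => f (t • K) / t) '' Set.Ioi (0:ℝ))

theorem Nfun_mem (K : E) {t : ℝ} (ht : 0 < t) :
    f (t • K) / t ∈ (fun t => f (t • K) / t) '' Set.Ioi (0:ℝ) := ⟨t, ht, rfl⟩

include hf hf0 in
theorem Nfun_bddBelow (K : E) :
    ∀ x ∈ (fun t => f (t • K) / t) '' Set.Ioi (0:ℝ), -f (-K) ≤ x := by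
  rintro x ⟨t, ht, rfl⟩
  rw [Set.mem_Ioi] at ht
  rcases le_total t 1 with h1 | h1
  · have h2 : f (t • (-K)) / t ≤ f ((1:ℝ) • (-K)) / 1 := slope_mono_aux f hf hf0 ht h1 (-K)
    rw [one_smul, div_one] at h2
    have h3 : 0 ≤ f (t • K) + f (t • (-K)) := by
      have := nonneg_add_aux f hf hf0 (t • K)
      rwa [← smul_neg] at this
    have h2' : f (t • (-K)) ≤ f (-K) * t := (div_le_iff₀ ht).1 h2
    rw [le_div_iff₀ ht]
    linarith
  · have h2 : f ((1:ℝ) • K) / 1 ≤ f (t • K) / t := slope_mono_aux f hf hf0 one_pos h1 K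
    rw [one_smul, div_one] at h2
    have := nonneg_add_aux f hf hf0 K
    linarith

include hf hf0 in
theorem Nfun_le_slope (K : E) {t : ℝ} (ht : 0 < t) : Nfun f K ≤ f (t • K) / t :=
  csInf_le ⟨_, Nfun_bddBelow f hf hf0 K⟩ (Nfun_mem f K ht)

include hf hf0 in
theorem Nfun_le (K : E) : Nfun f K ≤ f K := by
  have := Nfun_le_slope f hf hf0 K one_pos
  rwa [one_smul, div_one] at this

include hf hf0 in
theorem le_Nfun (K : E) {c : ℝ} (hc : ∀ t : ℝ, 0 < t → c ≤ f (t • K) / t) :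
    c ≤ Nfun f K := by
  apply le_csInf ⟨_, Nfun_mem f K one_pos⟩
  rintro x ⟨t, ht, rfl⟩
  exact hc t ht

include hf hf0 in
theorem Nfun_zero : Nfun f 0 = 0 := by
  apply le_antisymm
  · have := Nfun_le f hf hf0 0; rwa [hf0] at this
  · apply le_Nfun f hf hf0
    intro t ht
    rw [smul_zero, hf0, zero_div]

include hf hf0 in
theorem Nfun_smul_le (c : ℝ) (hc : 0 < c) (K : E) : Nfun f (c • K) ≤ c * Nfun f K := by
  have h1 : ∀ s : ℝ, 0 < s → Nfun f (c • K) / c ≤ f (s • K) / s := by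
    intro s hs
    have ht : 0 < s / c := by positivity
    have h := Nfun_le_slope f hf hf0 (c • K) ht
    rw [smul_smul, div_mul_cancel₀ _ hc.ne'] at h
    have heq : f (s • K) / (s / c) = f (s • K) / s * c := by
      rw [div_div_eq_mul_div, div_mul_eq_mul_div]
    rw [heq] at h
    rw [div_le_iff₀ hc]
    exact h
  have := le_Nfun f hf hf0 K h1
  calc Nfun f (c • K) = c * (Nfun f (c • K) / c) := by field_simp
    _ ≤ c * Nfun f K := by exact mul_le_mul_of_nonneg_left this hc.le

include hf hf0 in
theorem Nfun_smul (c : ℝ) (hc : 0 < c) (K : E) : Nfun f (c • K) = c * Nfun f K := by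
  refine le_antisymm (Nfun_smul_le f hf hf0 c hc K) ?_
  have h2 := Nfun_smul_le f hf hf0 c⁻¹ (by positivity) (c • K)
  rw [smul_smul, inv_mul_cancel₀ hc.ne', one_smul] at h2
  calc c * Nfun f K ≤ c * (c⁻¹ * Nfun f (c • K)) := mul_le_mul_of_nonneg_left h2 hc.le
    _ = Nfun f (c • K) := by field_simp

include hf hf0 in
theorem Nfun_add (K K' : E) : Nfun f (K + K') ≤ Nfun f K + Nfun f K' := by
  refine le_of_forall_pos_le_add ?_
  intro ε hε
  obtain ⟨x1, ⟨t1, ht1, rfl⟩, hx1⟩ := exists_lt_of_csInf_lt ⟨_, Nfun_mem f K one_pos⟩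
    (show Nfun f K < Nfun f K + ε/2 by linarith)
  obtain ⟨x2, ⟨t2, ht2, rfl⟩, hx2⟩ := exists_lt_of_csInf_lt ⟨_, Nfun_mem f K' one_pos⟩
    (show Nfun f K' < Nfun f K' + ε/2 by linarith)
  rw [Set.mem_Ioi] at ht1 ht2
  set s := min t1 t2 with hs
  have hs0 : 0 < s := lt_min ht1 ht2
  have ht : 0 < s / 2 := by positivity
  have key : f ((s/2) • (K + K')) ≤ (1/2) * f (s • K) + (1/2) * f (s • K') := by
    have := hf.2 (Set.mem_univ (s • K)) (Set.mem_univ (s • K'))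
      (by norm_num : (0:ℝ) ≤ 1/2) (by norm_num : (0:ℝ) ≤ 1/2) (by norm_num)
    rw [smul_eq_mul, smul_eq_mul] at this
    have heq : (1/2 : ℝ) • (s • K) + (1/2 : ℝ) • (s • K') = (s/2) • (K + K') := by
      rw [smul_smul, smul_smul, smul_add]; ring_nf
    rwa [heq] at this
  have step : Nfun f (K + K') ≤ f (s • K) / s + f (s • K') / s := by
    have := Nfun_le_slope f hf hf0 (K + K') ht
    refine this.trans ?_
    rw [← add_div, div_le_div_iff₀ ht hs0]
    nlinarith
  have m1 : f (s • K) / s ≤ f (t1 • K) / t1 :=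
    slope_mono_aux f hf hf0 hs0 (min_le_left _ _) K
  have m2 : f (s • K') / s ≤ f (t2 • K') / t2 :=
    slope_mono_aux f hf hf0 hs0 (min_le_right _ _) K'
  linarith

end N

theorem exists_supergradient (n : ℕ) (π : (Fin n → ℝ) → ℝ)
    (hconc : ConcaveOn ℝ Set.univ π) (hzero : π 0 = 0) :
    ∃ g : (Fin n → ℝ) →ₗ[ℝ] ℝ, ∀ K, π K ≤ g K := by
  set f : (Fin n → ℝ) → ℝ := fun K => -π (-K) with hfdef
  have hf : ConvexOn ℝ Set.univ f := by
    refine ⟨convex_univ, ?_⟩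
    intro x _ y _ a b ha hb hab
    have key := hconc.2 (Set.mem_univ (-x)) (Set.mem_univ (-y)) ha hb hab
    have hneg : -(a • x + b • y) = a • (-x) + b • (-y) := by
      rw [smul_neg, smul_neg, neg_add]
    simp only [f, smul_eq_mul] at key ⊢
    rw [hneg]
    linarith
  have hf0 : f 0 = 0 := by simp [f, hzero]
  obtain ⟨g, -, hg⟩ := exists_extension_of_le_sublinear
    (LinearMap.toPMap (0 : (Fin n → ℝ) →ₗ[ℝ] ℝ) ⊥) (Nfun f)
    (fun c hc x => Nfun_smul f hf hf0 c hc x) (Nfun_add f hf hf0)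
    (by
      rintro ⟨x, hx⟩
      have hx' : x = 0 := by simpa [LinearMap.toPMap] using hx
      subst hx'
      simp [LinearMap.toPMap, Nfun_zero f hf hf0])
  refine ⟨g, fun K => ?_⟩
  have h1 : g (-K) ≤ Nfun f (-K) := hg (-K)
  have h2 : Nfun f (-K) ≤ f (-K) := Nfun_le f hf hf0 (-K)
  have h3 : f (-K) = -π K := by simp [f]
  have h4 : g (-K) ≤ -π K := by linarith
  rw [map_neg] at h4
  linarith

/-- For a concave, monotone, translation-invariant `π : ℝ^n → ℝ` with `π(0) = 0`,
the infimum over all `λ` of the concave dual `π̃(λ) = sup_K (π(K) − λ·K)` equals `0`. -/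
theorem stmt_3 (n : ℕ) (hn : 1 ≤ n) (π : (Fin n → ℝ) → ℝ)
    (hconc : ConcaveOn ℝ Set.univ π)
    (hmono : Monotone π)
    (hti : ∀ (K : Fin n → ℝ) (a : ℝ), π (fun y => K y + a) = π K + a)
    (hzero : π 0 = 0) :
    (⨅ l : Fin n → ℝ, ⨆ K : Fin n → ℝ, ((π K - ∑ y, l y * K y : ℝ) : EReal)) = 0 := by
  obtain ⟨g, hg⟩ := exists_supergradient n π hconc hzero
  set l : Fin n → ℝ := fun y => g (fun j => if y = j then 1 else 0) with hl
  have hgl : ∀ K : Fin n → ℝ, g K = ∑ y, l y * K y := by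
    intro K
    rw [LinearMap.pi_apply_eq_sum_univ g K]
    exact Finset.sum_congr rfl fun y _ => by rw [smul_eq_mul, mul_comm]
  apply le_antisymm
  · refine iInf_le_of_le l (iSup_le fun K => ?_)
    have h1 : π K - ∑ y, l y * K y ≤ 0 := by
      have := hg K
      rw [hgl K] at this
      linarith
    exact_mod_cast h1
  · refine le_iInf fun l' => ?_
    refine le_trans ?_ (le_iSup _ (0 : Fin n → ℝ))
    have : (π 0 - ∑ y, l' y * (0 : Fin n → ℝ) y : ℝ) = 0 := by
      simp [hzero]
    rw [this]
    exact le_refl _
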